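/- Let q be an odd prime power and f: F_q → F_q a function representable by a Dembowski–Ostrom polynomial. Then f is a planar function if and only if f is 2-to-1, i.e., every nonzero element of F_q has either 0 or 2 preimages under f (and 0 has exactly one preimage). -/

import Mathlib

/-- **Weng–Hu criterion.** A function of DO type over `F_q`,
`q` odd, is planar iff it is 2-to-1: every nonzero element has 0 or 2
preimages, and 0 has exactly one preimage. -/
theorem DO_planar_iff_two_to_one (F : Type) [Field F] [Fintype F] [DecidableEq F]
    (hodd : Odd (Fintype.card F))
    (p : ℕ) [hp : Fact p.Prime] [CharP F p]
    (N : ℕ) (a : Fin N → Fin N → F) (f : F → F)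
    (hf : ∀ x, f x = ∑ i : Fin N, ∑ j : Fin N, a i j * x ^ (p ^ (i : ℕ) + p ^ (j : ℕ))) :
    (∀ c : F, c ≠ 0 → Function.Bijective (fun x => f (x + c) - f x - f c)) ↔
      ((∀ y : F, y ≠ 0 →
          Fintype.card {x : F // f x = y} = 0 ∨ Fintype.card {x : F // f x = y} = 2) ∧
        Fintype.card {x : F // f x = 0} = 1) := by
  classical
  -- p is odd
  have hpodd : Odd p := by
    rcases hp.out.eq_two_or_odd' with h2 | h
    · exfalso
      obtain ⟨n, hn⟩ := FiniteField.card F p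
      rw [hn.2, h2] at hodd
      rw [Nat.odd_iff] at hodd
      have : 2 ∣ 2 ^ (n : ℕ) := dvd_pow_self 2 n.2.ne'
      omega
    · exact h
  have hp2 : p ≠ 2 := by
    rintro rfl
    have := Nat.odd_iff.mp hpodd
    omega
  have h2F : (2 : F) ≠ 0 := by
    intro h
    have hdvd : p ∣ 2 := (CharP.cast_eq_zero_iff F p 2).mp (by exact_mod_cast h)
    exact hp2 ((Nat.prime_dvd_prime_iff_eq hp.out Nat.prime_two).mp hdvd)
  have hselfneg : ∀ z : F, z = -z → z = 0 := by
    intro z hz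
    have : 2 * z = 0 := by rw [two_mul]; nth_rw 2 [hz]; ring
    rcases mul_eq_zero.mp this with h | h
    · exact absurd h h2F
    · exact h
  -- basic facts about f
  have hf0 : f 0 = 0 := by
    rw [hf]
    apply Finset.sum_eq_zero
    intro i _
    apply Finset.sum_eq_zero
    intro j _
    rw [zero_pow, mul_zero]
    have := Nat.one_le_pow (i : ℕ) p hp.out.pos
    omega
  have hEven : ∀ i j : Fin N, Even (p ^ (i : ℕ) + p ^ (j : ℕ)) := by
    intro i j
    exact (hpodd.pow).add_odd hpodd.pow
  have hfneg : ∀ x : F, f (-x) = f x := by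
    intro x
    rw [hf, hf]
    refine Finset.sum_congr rfl fun i _ => Finset.sum_congr rfl fun j _ => ?_
    rw [(hEven i j).neg_pow]
  haveI : ExpChar F p := ExpChar.prime hp.out
  -- expansion of the difference operator
  have haux : ∀ (x c : F) (m n : ℕ),
      (x + c) ^ (p ^ m + p ^ n) - x ^ (p ^ m + p ^ n) - c ^ (p ^ m + p ^ n)
        = x ^ p ^ m * c ^ p ^ n + x ^ p ^ n * c ^ p ^ m := by
    intro x c m n
    rw [pow_add, add_pow_char_pow, add_pow_char_pow, pow_add, pow_add]
    ring
  have hD : ∀ c x : F, f (x + c) - f x - f c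
      = ∑ i : Fin N, ∑ j : Fin N,
          a i j * (x ^ p ^ (i : ℕ) * c ^ p ^ (j : ℕ) + x ^ p ^ (j : ℕ) * c ^ p ^ (i : ℕ)) := by
    intro c x
    rw [hf (x + c), hf x, hf c, ← Finset.sum_sub_distrib, ← Finset.sum_sub_distrib]
    refine Finset.sum_congr rfl fun i _ => ?_
    rw [← Finset.sum_sub_distrib, ← Finset.sum_sub_distrib]
    refine Finset.sum_congr rfl fun j _ => ?_
    rw [← mul_sub, ← mul_sub, sub_sub, ← sub_sub, haux]
  -- additivity of the difference operator
  have hAdd : ∀ c x y : F,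
      f (x + y + c) - f (x + y) - f c
        = (f (x + c) - f x - f c) + (f (y + c) - f y - f c) := by
    intro c x y
    rw [hD, hD, hD, ← Finset.sum_add_distrib]
    refine Finset.sum_congr rfl fun i _ => ?_
    rw [← Finset.sum_add_distrib]
    refine Finset.sum_congr rfl fun j _ => ?_
    rw [add_pow_char_pow, add_pow_char_pow]
    ring
  constructor
  · -- planar → 2-to-1
    intro hplanar
    -- key: f x = f y → x = y ∨ x = -y
    have hP : ∀ x y : F, f x = f y → x = y ∨ x = -y := by
      intro x y hxy
      by_cases hxyeq : x = y
      · exact Or.inl hxyeq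
      · right
        set c := y - x with hc
        have hc0 : c ≠ 0 := sub_ne_zero.mpr (Ne.symm hxyeq)
        have hinj := (hplanar c hc0).injective
        have h1 : f (x + c) - f x - f c = f (-y + c) - f (-y) - f c := by
          have e1 : x + c = y := by ring
          have e2 : -y + c = -x := by rw [hc]; ring
          rw [e1, e2, hfneg, hfneg, hxy]
        exact hinj h1
    have hfib0 : ∀ x : F, f x = 0 → x = 0 := by
      intro x hx
      rcases hP x 0 (by rw [hx, hf0]) with h | h
      · exact h
      · simpa using h
    constructor
    · intro y hy
      by_cases hex : ∃ x : F, f x = y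
      · right
        obtain ⟨x₀, hx₀⟩ := hex
        have hx₀0 : x₀ ≠ 0 := by
          intro h; rw [h, hf0] at hx₀; exact hy hx₀.symm
        have hne : x₀ ≠ -x₀ := fun h => hx₀0 (hselfneg _ h)
        have hiff : ∀ x : F, f x = y ↔ x = x₀ ∨ x = -x₀ := by
          intro x
          constructor
          · intro h
            exact hP x x₀ (h.trans hx₀.symm)
          · rintro (rfl | rfl)
            · exact hx₀
            · rw [hfneg]; exact hx₀
        rw [Fintype.card_subtype]
        have : Finset.univ.filter (fun x : F => f x = y) = {x₀, -x₀} := by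
          ext x
          simp [hiff x]
        rw [this, Finset.card_pair hne]
      · left
        rw [Fintype.card_eq_zero_iff]
        exact ⟨fun ⟨x, hx⟩ => hex ⟨x, hx⟩⟩
    · have hiff : ∀ x : F, f x = 0 ↔ x = 0 := fun x => ⟨hfib0 x, by rintro rfl; exact hf0⟩
      calc Fintype.card {x : F // f x = 0}
          = Fintype.card {x : F // x = 0} :=
            Fintype.card_congr (Equiv.subtypeEquivRight hiff)
        _ = 1 := Fintype.card_subtype_eq (0 : F)
  · -- 2-to-1 → planar
    rintro ⟨h2, h1⟩
    -- key: f u = f v → u = v ∨ u = -v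
    have hP : ∀ u v : F, f u = f v → u = v ∨ u = -v := by
      intro u v huv
      by_cases hu0 : f u = 0
      · left
        have hsub : Subsingleton {x : F // f x = 0} :=
          Fintype.card_le_one_iff_subsingleton.mp (le_of_eq h1)
        have := hsub.elim ⟨u, hu0⟩ ⟨v, huv ▸ hu0⟩
        exact congrArg Subtype.val this
      · -- fiber of y := f u has card 2 and contains u, -u, v
        set y := f u with hy
        have hy0 : y ≠ 0 := hu0
        have hu00 : u ≠ 0 := fun h => hu0 (show f u = 0 by rw [h]; exact hf0)
        have hne : u ≠ -u := fun h => hu00 (hselfneg _ h)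
        have hcard : Fintype.card {x : F // f x = y} = 2 := by
          rcases h2 y hy0 with h | h
          · exfalso
            rw [Fintype.card_eq_zero_iff] at h
            exact h.elim ⟨u, rfl⟩
          · exact h
        rw [Fintype.card_subtype] at hcard
        have hsubset : ({u, -u} : Finset F) ⊆ Finset.univ.filter (fun x : F => f x = y) := by
          intro x hx
          simp only [Finset.mem_insert, Finset.mem_singleton] at hx
          rcases hx with rfl | rfl
          · simp [hy]
          · simp [hfneg, hy]
        have heq : Finset.univ.filter (fun x : F => f x = y) = {u, -u} := by
          symm
          apply Finset.eq_of_subset_of_card_le hsubset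
          rw [hcard, Finset.card_pair hne]
        have hv : v ∈ ({u, -u} : Finset F) := by
          rw [← heq]
          simp [huv.symm]
        simp only [Finset.mem_insert, Finset.mem_singleton] at hv
        rcases hv with rfl | rfl
        · exact Or.inl rfl
        · exact Or.inr (neg_neg u).symm
    intro c hc
    set φ : F →+ F := AddMonoidHom.mk' (fun x => f (x + c) - f x - f c) (hAdd c) with hφ
    have hinj : Function.Injective φ := by
      rw [injective_iff_map_eq_zero]
      intro x hx
      by_contra hx0
      have hφx : f (x + c) - f x - f c = 0 := hx
      have hφnx : f (-x + c) - f (-x) - f c = 0 := by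
        have h' : φ (-x) = 0 := by rw [map_neg, hx, neg_zero]
        exact h'
      have heq : f (-x + c) = f (x + c) := by
        have e1 : f (x + c) = f x + f c := by linear_combination hφx
        have e2 : f (-x + c) = f (-x) + f c := by linear_combination hφnx
        rw [e1, e2, hfneg]
      rcases hP _ _ heq with h | h
      · have hxx : x = -x := (add_right_cancel h).symm
        exact hx0 (hselfneg x hxx)
      · have hcc : c = -c := by
          have h' : -x + c = -x + -c := by rw [h]; ring
          exact add_left_cancel h'
        exact hc (hselfneg c hcc)
    exact Finite.injective_iff_bijective.mp hinj
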